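/- For any positive integer q, any 0 < ε ≤ 1 and any reals λ > μ_q* > 0, there exist a positive integer m, independent random variables X_1, ..., X_m each taking values in {0,1}, and a multilinear polynomial f of total power q with nonnegative coefficients such that: (i) μ_j(f) ≤ ε^{q−j} μ_q* for all 0 ≤ j ≤ q; (ii) Pr[ f(X) − E[f(X)] ≥ λ ] ≥ exp(−2ε) · ( ε / (4q(λ/μ_q*)^{1/q}) )^{4q(λ/μ_q*)^{1/q}}; and (iii) Pr[ f(X) − E[f(X)] ≥ μ_q* ] ≥ exp(−2ε) · ( ε/(q+1) )^{q+1}. -/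

import Mathlib

open MeasureTheory ProbabilityTheory Finset

/-- The smoothness parameter `μ_r` of a multilinear polynomial `Σ_{h ∈ H} w_h Π_{v ∈ h} x_v`
with respect to random variables `Y`: the maximum, over subsets `h₀` of the vertex set of
cardinality `r`, of `Σ_{h ∈ H, h ⊇ h₀} w_h Π_{v ∈ h \ h₀} E[|Y_v|]`. -/
noncomputable def muMulti {Ω : Type*} [MeasurableSpace Ω] (P : Measure Ω) {n : ℕ}
    (H : Finset (Finset (Fin n))) (w : Finset (Fin n) → ℝ) (Y : Fin n → Ω → ℝ) (r : ℕ) : ℝ :=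
  sSup {x : ℝ | ∃ h₀ : Finset (Fin n), h₀.card = r ∧
    x = ∑ h ∈ H.filter (fun h => h₀ ⊆ h), w h * ∏ v ∈ h \ h₀, ∫ ω, |Y v ω| ∂P}

section Aux

lemma pow_le_choose_mul_pow (k : ℕ) : ∀ n : ℕ, k ≤ n →
    (n:ℝ) ^ k ≤ (n.choose k : ℝ) * (k:ℝ) ^ k := by
  induction k with
  | zero => intro n _; simp
  | succ k ih =>
    intro n hkn
    obtain ⟨m, rfl⟩ : ∃ m, n = m + 1 := ⟨n - 1, by omega⟩
    have hkm : k ≤ m := by omega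
    have IH := ih m hkm
    rcases Nat.eq_zero_or_pos k with rfl | hk
    · simp
    have key : ((m+1).choose (k+1) : ℝ) * (k+1) = ((m:ℝ)+1) * (m.choose k) := by
      have := congrArg (Nat.cast (R := ℝ)) (Nat.add_one_mul_choose_eq m k).symm
      push_cast at this ⊢
      linarith [this]
    have hA : (0:ℝ) < (k:ℝ)^k := by positivity
    have step1 : (((m:ℝ)+1)*k)^k ≤ ((m:ℝ)*(k+1))^k := by
      apply pow_le_pow_left₀ (by positivity)
      have : (k:ℝ) ≤ m := by exact_mod_cast hkm
      nlinarith
    have h1 : ((m:ℝ)+1)^(k+1) * (k:ℝ)^k ≤ (((m+1).choose (k+1) : ℝ) * ((k:ℝ)+1)^(k+1)) * (k:ℝ)^k := by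
      calc ((m:ℝ)+1)^(k+1) * (k:ℝ)^k = ((m:ℝ)+1) * ((((m:ℝ)+1)*k)^k) := by
            rw [mul_pow]; ring
        _ ≤ ((m:ℝ)+1) * (((m:ℝ)*(k+1))^k) := by
            apply mul_le_mul_of_nonneg_left step1 (by positivity)
        _ = ((m:ℝ)+1) * ((m:ℝ)^k * ((k:ℝ)+1)^k) := by rw [mul_pow]
        _ ≤ ((m:ℝ)+1) * (((m.choose k : ℝ) * (k:ℝ)^k) * ((k:ℝ)+1)^k) := by
            apply mul_le_mul_of_nonneg_left _ (by positivity)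
            apply mul_le_mul_of_nonneg_right IH (by positivity)
        _ = (((m:ℝ)+1) * (m.choose k)) * (((k:ℝ)+1)^k * (k:ℝ)^k) := by ring
        _ = (((m+1).choose (k+1) : ℝ) * (k+1)) * (((k:ℝ)+1)^k * (k:ℝ)^k) := by rw [key]
        _ = (((m+1).choose (k+1) : ℝ) * ((k:ℝ)+1)^(k+1)) * (k:ℝ)^k := by
            rw [pow_succ]; ring
    have h2 := le_of_mul_le_mul_right h1 hA
    push_cast
    push_cast at h2
    convert h2 using 2 <;> try ring

lemma exp_neg_two_le {x : ℝ} (h0 : 0 ≤ x) (h2 : x ≤ 1/2) : Real.exp (-(2*x)) ≤ 1 - x := by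
  have h := Real.add_one_le_exp (2*x)
  rw [Real.exp_neg]
  rw [inv_le_iff_one_le_mul₀ (by positivity)]
  nlinarith [Real.exp_pos (2*x)]

noncomputable def bern (p : ℝ) : Measure Bool :=
  (ENNReal.ofReal p) • Measure.dirac true + (ENNReal.ofReal (1-p)) • Measure.dirac false

lemma bern_singleton (p : ℝ) (b : Bool) :
    bern p {b} = ENNReal.ofReal (if b then p else 1 - p) := by
  have ht : (Measure.dirac (true:Bool)) {b} = if b then 1 else 0 := by
    cases b <;> simp [Measure.dirac_apply' _ (measurableSet_singleton _)]
  have hf : (Measure.dirac (false:Bool)) {b} = if b then 0 else 1 := by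
    cases b <;> simp [Measure.dirac_apply' _ (measurableSet_singleton _)]
  cases b <;> simp [bern, Measure.add_apply, ht, hf]

lemma bern_isProb (p : ℝ) (hp0 : 0 ≤ p) (hp1 : p ≤ 1) :
    IsProbabilityMeasure (bern p) := by
  constructor
  simp [bern, Measure.add_apply]
  rw [← ENNReal.ofReal_add hp0 (by linarith)]
  norm_num

lemma bern_integral (p : ℝ) (hp0 : 0 ≤ p) (hp1 : p ≤ 1) (g : Bool → ℝ) :
    ∫ b, g b ∂(bern p) = p * g true + (1 - p) * g false := by
  haveI i1 : IsFiniteMeasure ((ENNReal.ofReal p) • Measure.dirac (true:Bool)) :=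
    ⟨by simp [ENNReal.ofReal_lt_top]⟩
  haveI i2 : IsFiniteMeasure ((ENNReal.ofReal (1-p)) • Measure.dirac (false:Bool)) :=
    ⟨by simp [ENNReal.ofReal_lt_top]⟩
  have h1 : Integrable g ((ENNReal.ofReal p) • Measure.dirac (true:Bool)) :=
    Integrable.of_finite
  have h2 : Integrable g ((ENNReal.ofReal (1-p)) • Measure.dirac (false:Bool)) :=
    Integrable.of_finite
  rw [bern, integral_add_measure h1 h2, integral_smul_measure, integral_smul_measure,
    integral_dirac, integral_dirac, ENNReal.toReal_ofReal hp0,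
    ENNReal.toReal_ofReal (by linarith)]
  simp [smul_eq_mul]

lemma iIndep_coords {n : ℕ} (μ : Fin n → Measure Bool) [∀ i, IsProbabilityMeasure (μ i)] :
    iIndepFun
      (fun i (ω : Fin n → Bool) => ω i) (Measure.pi μ) := by
  rw [iIndepFun_iff_measure_inter_preimage_eq_mul]
  intro S sets _
  have h1 : (⋂ i ∈ S, (fun ω : Fin n → Bool => ω i) ⁻¹' sets i)
      = Set.pi Set.univ (fun i => if i ∈ S then sets i else Set.univ) := by
    ext ω
    simp only [Set.mem_iInter, Set.mem_preimage, Set.mem_pi, Set.mem_univ, true_implies]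
    constructor
    · intro h i
      by_cases hi : i ∈ S <;> simp [hi, h]
    · intro h i hi
      have := h i
      simpa [hi] using this
  have h2 : ∀ i, (fun ω : Fin n → Bool => ω i) ⁻¹' sets i
      = Set.pi Set.univ (fun j => if j = i then sets i else Set.univ) := by
    intro i
    ext ω
    simp only [Set.mem_preimage, Set.mem_pi, Set.mem_univ, true_implies]
    constructor
    · intro h j
      by_cases hj : j = i <;> simp [hj, h]
    · intro h
      have := h i
      simpa using this
  rw [h1, Measure.pi_pi]
  have h3 : ∀ i ∈ S, Measure.pi μ ((fun ω : Fin n → Bool => ω i) ⁻¹' sets i) = μ i (sets i) := by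
    intro i _
    rw [h2 i, Measure.pi_pi]
    rw [Finset.prod_eq_single i (fun j _ hj => by rw [if_neg hj]; exact measure_univ) (by simp)]
    simp
  have h4 : ∀ i : Fin n, μ i (if i ∈ S then sets i else Set.univ)
      = if i ∈ S then μ i (sets i) else 1 := by
    intro i; by_cases hi : i ∈ S
    · simp [hi]
    · rw [if_neg hi, if_neg hi]; exact measure_univ
  rw [Finset.prod_congr rfl (fun i _ => h4 i), Finset.prod_ite_mem, Finset.univ_inter]
  exact Finset.prod_congr rfl (fun i hi => (h3 i hi).symm)

lemma pi_integral_prod {n : ℕ} (p : ℝ) (hp0 : 0 ≤ p) (hp1 : p ≤ 1) (h : Finset (Fin n)) :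
    ∫ ω : Fin n → Bool, (∏ v ∈ h, (if ω v then (1:ℝ) else 0))
      ∂(Measure.pi fun _ => bern p) = p ^ h.card := by
  haveI := bern_isProb p hp0 hp1
  letI : MeasureSpace Bool := { volume := bern p }
  have hvol : (Measure.pi fun _ : Fin n => bern p) = (volume : Measure (Fin n → Bool)) := by
    rw [volume_pi]; rfl
  rw [hvol]
  have hprod : ∀ ω : Fin n → Bool, (∏ v ∈ h, (if ω v then (1:ℝ) else 0))
      = ∏ i : Fin n, (fun i b => if i ∈ h then (if b then (1:ℝ) else 0) else 1) i (ω i) := by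
    intro ω
    rw [← Finset.prod_subset (Finset.subset_univ h) (fun i _ hi => by simp [hi])]
    exact Finset.prod_congr rfl (fun i hi => by simp [hi])
  simp_rw [hprod]
  have key := MeasureTheory.integral_fintype_prod_eq_prod (𝕜 := ℝ) (μ := fun _ : Fin n => (volume : Measure Bool))
    (fun i (b : Bool) => if i ∈ h then (if b then (1:ℝ) else 0) else 1)
  rw [show (∫ ω : Fin n → Bool, ∏ i : Fin n,
      (fun i (b : Bool) => if i ∈ h then (if b then (1:ℝ) else 0) else 1) i (ω i) ∂ℙ)
    = ∏ i : Fin n, ∫ b : Bool, (if i ∈ h then (if b then (1:ℝ) else 0) else 1) from key]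
  have : ∀ i : Fin n, (∫ b : Bool, (if i ∈ h then (if b then (1:ℝ) else 0) else 1))
      = if i ∈ h then p else 1 := by
    intro i
    rw [show (∫ b : Bool, (if i ∈ h then (if b then (1:ℝ) else 0) else 1))
      = ∫ b, (fun b => if i ∈ h then (if b then (1:ℝ) else 0) else 1) b ∂(bern p) from rfl,
      bern_integral p hp0 hp1]
    by_cases hi : i ∈ h <;> simp [hi]
  rw [Finset.prod_congr rfl (fun i _ => this i), Finset.prod_ite_mem, Finset.univ_inter,
    Finset.prod_const]

lemma pi_singleton {n : ℕ} (p : ℝ) (hp0 : 0 ≤ p) (hp1 : p ≤ 1) (ω : Fin n → Bool) :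
    (Measure.pi fun _ => bern p) {ω} = ∏ i : Fin n, ENNReal.ofReal (if ω i then p else 1-p) := by
  haveI := bern_isProb p hp0 hp1
  rw [← Set.univ_pi_singleton ω, Measure.pi_pi]
  exact Finset.prod_congr rfl (fun i _ => bern_singleton p (ω i))

end Aux

set_option maxHeartbeats 2000000 in
theorem lower_bound_one (q : ℕ) (hq : 1 ≤ q) (ε : ℝ) (hε0 : 0 < ε) (hε1 : ε ≤ 1)
    (lam μq : ℝ) (hμq : 0 < μq) (hlam : μq < lam) :
    ∃ (m : ℕ) (Ω : Type) (_ : MeasurableSpace Ω) (P : Measure Ω)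
      (X : Fin m → Ω → ℝ) (H : Finset (Finset (Fin m))) (w : Finset (Fin m) → ℝ),
      IsProbabilityMeasure P ∧
      (∀ i, Measurable (X i)) ∧
      iIndepFun X P ∧
      (∀ i ω, X i ω = 0 ∨ X i ω = 1) ∧
      (∀ h ∈ H, h.card ≤ q) ∧
      (∀ h ∈ H, 0 ≤ w h) ∧
      (∀ j ≤ q, muMulti P H w X j ≤ ε ^ (q - j) * μq) ∧
      (Real.exp (-(2 * ε)) *
          (ε / (4 * q * (lam / μq) ^ ((q : ℝ)⁻¹))) ^ (4 * (q : ℝ) * (lam / μq) ^ ((q : ℝ)⁻¹)) ≤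
        (P {ω | (∫ ω', ∑ h ∈ H, w h * ∏ v ∈ h, X v ω' ∂P) + lam ≤
            ∑ h ∈ H, w h * ∏ v ∈ h, X v ω}).toReal) ∧
      (Real.exp (-(2 * ε)) * (ε / (q + 1)) ^ (q + 1) ≤
        (P {ω | (∫ ω', ∑ h ∈ H, w h * ∏ v ∈ h, X v ω' ∂P) + μq ≤
            ∑ h ∈ H, w h * ∏ v ∈ h, X v ω}).toReal) := by
  have hq0 : (0:ℝ) < q := by exact_mod_cast hq
  have hlamq : 1 < lam / μq := (one_lt_div hμq).mpr hlam
  set R : ℝ := (lam / μq) ^ ((q : ℝ)⁻¹) with hR_def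
  have hR1 : 1 < R := by
    rw [hR_def]
    apply Real.one_lt_rpow_iff_of_pos (by positivity) |>.mpr
    exact Or.inl ⟨hlamq, by positivity⟩
  have hR0 : 0 < R := lt_trans one_pos hR1
  have hRq : R ^ q = lam / μq := by
    rw [hR_def, ← Real.rpow_natCast ((lam / μq) ^ ((q : ℝ)⁻¹)) q, ← Real.rpow_mul (by positivity),
      inv_mul_cancel₀ (by positivity), Real.rpow_one]
  set n : ℕ := ⌈2 * (q:ℝ) * R⌉₊ with hn_def
  have hn1 : 2 * (q:ℝ) * R ≤ n := Nat.le_ceil _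
  have hn2 : (n:ℝ) ≤ 4 * q * R := by
    have h1 : (n:ℝ) < 2 * (q:ℝ) * R + 1 := Nat.ceil_lt_add_one (by positivity)
    have hq1 : (1:ℝ) ≤ q := by exact_mod_cast hq
    have h2 : (1:ℝ) ≤ 2 * (q:ℝ) * R := by nlinarith
    linarith
  have hqn : 2 * q + 1 ≤ n := by
    have : (2 * q : ℝ) < n := by nlinarith
    exact_mod_cast Nat.add_one_le_iff.mpr (by exact_mod_cast this)
  have hq1n : q + 1 ≤ n := by omega
  have hqn' : q ≤ n := by omega
  have hn_pos : 0 < n := by omega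
  have hn_posR : (0:ℝ) < n := by exact_mod_cast hn_pos
  have hn3 : (3:ℝ) ≤ n := by exact_mod_cast (by omega : 3 ≤ n)
  set p : ℝ := ε / n with hp_def
  have hp0 : 0 < p := by positivity
  have hp_half : p ≤ 1/2 := by
    rw [hp_def, div_le_iff₀ hn_posR]
    nlinarith
  have hp1 : p ≤ 1 := by linarith
  have hnp : (n:ℝ) * p = ε := by
    rw [hp_def]; field_simp
  haveI hbern : IsProbabilityMeasure (bern p) := bern_isProb p hp0.le hp1
  set P : Measure (Fin n → Bool) := Measure.pi (fun _ => bern p) with hP_def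
  haveI hPprob : IsProbabilityMeasure P := by
    rw [hP_def]; infer_instance
  set X : Fin n → (Fin n → Bool) → ℝ := fun i ω => if ω i then 1 else 0 with hX_def
  set H : Finset (Finset (Fin n)) := Finset.powersetCard q Finset.univ with hH_def
  have hXint : ∀ h : Finset (Fin n), (∫ ω, ∏ v ∈ h, X v ω ∂P) = p ^ h.card := by
    intro h
    exact pi_integral_prod p hp0.le hp1 h
  have hXabs : ∀ v : Fin n, (∫ ω, |X v ω| ∂P) = p := by
    intro v
    have h1 : ∀ ω : Fin n → Bool, |X v ω| = ∏ u ∈ ({v} : Finset (Fin n)), X u ω := by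
      intro ω; rw [Finset.prod_singleton]; by_cases h : ω v <;> simp [hX_def, h]
    calc (∫ ω, |X v ω| ∂P) = ∫ ω, ∏ u ∈ ({v}:Finset (Fin n)), X u ω ∂P := by simp_rw [h1]
      _ = p ^ ({v} : Finset (Fin n)).card := hXint {v}
      _ = p := by rw [Finset.card_singleton, pow_one]
  have hfval : ∀ ω : Fin n → Bool, (∑ h ∈ H, μq * ∏ v ∈ h, X v ω)
      = μq * (((Finset.univ.filter (fun i => ω i = true)).card).choose q : ℝ) := by
    intro ω
    set T := Finset.univ.filter (fun i => ω i = true) with hT_def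
    have hprod : ∀ h : Finset (Fin n), (∏ v ∈ h, X v ω) = if h ⊆ T then (1:ℝ) else 0 := by
      intro h
      by_cases hsub : h ⊆ T
      · rw [if_pos hsub]
        apply Finset.prod_eq_one
        intro v hv
        have : ω v = true := (Finset.mem_filter.mp (hsub hv)).2
        simp [hX_def, this]
      · rw [if_neg hsub]
        obtain ⟨v, hv, hvT⟩ : ∃ v ∈ h, v ∉ T := by
          by_contra hc
          push_neg at hc
          exact hsub hc
        apply Finset.prod_eq_zero hv
        have hωv : ω v ≠ true := fun hh => hvT (Finset.mem_filter.mpr ⟨Finset.mem_univ v, hh⟩)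
        simp [hX_def, hωv]
    simp_rw [hprod]
    rw [← Finset.mul_sum, Finset.sum_boole]
    have hfilter : H.filter (fun h => h ⊆ T) = Finset.powersetCard q T := by
      ext h
      simp only [hH_def, Finset.mem_filter, Finset.mem_powersetCard]
      constructor
      · rintro ⟨⟨_, hc⟩, hsub⟩; exact ⟨hsub, hc⟩
      · rintro ⟨hsub, hc⟩; exact ⟨⟨Finset.subset_univ _, hc⟩, hsub⟩
    rw [hfilter, Finset.card_powersetCard]
  have hEf : (∫ ω, ∑ h ∈ H, μq * ∏ v ∈ h, X v ω ∂P) = μq * ((n.choose q : ℝ) * p ^ q) := by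
    rw [integral_finset_sum _ (fun h _ => Integrable.of_finite)]
    have hterm : ∀ h ∈ H, (∫ ω, μq * ∏ v ∈ h, X v ω ∂P) = μq * p ^ q := by
      intro h hh
      rw [MeasureTheory.integral_const_mul, hXint h, (Finset.mem_powersetCard.mp hh).2]
    rw [Finset.sum_congr rfl hterm, Finset.sum_const, nsmul_eq_mul]
    rw [show H.card = n.choose q by rw [hH_def, Finset.card_powersetCard, Finset.card_univ,
      Fintype.card_fin]]
    ring
  have hCq : ((n.choose q : ℝ)) * p ^ q ≤ ε ^ q := by
    calc ((n.choose q : ℝ)) * p ^ q ≤ (n:ℝ)^q * p ^ q := by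
          apply mul_le_mul_of_nonneg_right _ (by positivity)
          exact_mod_cast Nat.choose_le_pow n q
      _ = ((n:ℝ) * p) ^ q := by rw [mul_pow]
      _ = ε ^ q := by rw [hnp]
  have hEub : μq * ((n.choose q : ℝ) * p ^ q) ≤ ε ^ q * μq := by
    calc μq * ((n.choose q : ℝ) * p ^ q) ≤ μq * ε ^ q := by
          exact mul_le_mul_of_nonneg_left hCq hμq.le
      _ = ε ^ q * μq := by ring
  have hεq1 : ε ^ q ≤ 1 := pow_le_one₀ hε0.le hε1
  refine ⟨n, (Fin n → Bool), inferInstance, P, X, H, fun _ => μq, hPprob, ?_, ?_, ?_, ?_, ?_,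
    ?_, ?_, ?_⟩
  · intro i
    exact (Measurable.of_discrete (f := fun b : Bool => if b then (1:ℝ) else 0)).comp
      (measurable_pi_apply i)
  · exact (iIndep_coords (fun _ => bern p)).comp
      (fun _ (b : Bool) => if b then (1:ℝ) else 0) (fun _ => Measurable.of_discrete)
  · intro i ω
    by_cases h : ω i <;> simp [hX_def, h]
  · intro h hh
    exact le_of_eq (Finset.mem_powersetCard.mp hh).2
  · intro h _
    exact hμq.le
  · -- the μ_j bounds
    intro j hj
    apply Real.sSup_le ?_ (by positivity)
    rintro x ⟨h₀, hcard, rfl⟩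
    have hterm : ∀ h ∈ H.filter (fun h => h₀ ⊆ h),
        μq * ∏ v ∈ h \ h₀, (∫ ω, |X v ω| ∂P) = μq * p ^ (q - j) := by
      intro h hh
      rw [Finset.mem_filter] at hh
      have hcard2 : (h \ h₀).card = q - j := by
        rw [Finset.card_sdiff_of_subset hh.2, hcard, (Finset.mem_powersetCard.mp hh.1).2]
      rw [Finset.prod_congr rfl (fun v _ => hXabs v), Finset.prod_const, hcard2]
    rw [Finset.sum_congr rfl hterm, Finset.sum_const, nsmul_eq_mul]
    have hcardle : ((H.filter (fun h => h₀ ⊆ h)).card : ℝ) ≤ (n:ℝ) ^ (q - j) := by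
      have step : (H.filter (fun h => h₀ ⊆ h)).card ≤ (Finset.powersetCard (q - j)
          (Finset.univ : Finset (Fin n))).card := by
        apply Finset.card_le_card_of_injOn (fun h => h \ h₀)
        · intro h hh
          rw [Finset.mem_coe, Finset.mem_filter] at hh
          simp only [Finset.mem_coe, Finset.mem_powersetCard]
          exact ⟨Finset.subset_univ _, by
            rw [Finset.card_sdiff_of_subset hh.2, hcard, (Finset.mem_powersetCard.mp hh.1).2]⟩
        · intro h1 hh1 h2 hh2 heq
          rw [Finset.mem_coe, Finset.mem_filter] at hh1 hh2
          have e1 := Finset.sdiff_union_of_subset hh1.2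
          have e2 := Finset.sdiff_union_of_subset hh2.2
          have heq' : h1 \ h₀ = h2 \ h₀ := heq
          rw [← e1, ← e2, heq']
      calc ((H.filter (fun h => h₀ ⊆ h)).card : ℝ)
          ≤ ((Finset.powersetCard (q - j) (Finset.univ : Finset (Fin n))).card : ℝ) := by
            exact_mod_cast step
        _ = (n.choose (q - j) : ℝ) := by
            rw [Finset.card_powersetCard, Finset.card_univ, Fintype.card_fin]
        _ ≤ ((n:ℝ)) ^ (q - j) := by exact_mod_cast Nat.choose_le_pow n (q-j)
    calc ((H.filter (fun h => h₀ ⊆ h)).card : ℝ) * (μq * p ^ (q - j))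
        ≤ (n:ℝ) ^ (q - j) * (μq * p ^ (q - j)) := by
          apply mul_le_mul_of_nonneg_right hcardle (by positivity)
      _ = ((n:ℝ) * p) ^ (q - j) * μq := by rw [mul_pow]; ring
      _ = ε ^ (q - j) * μq := by rw [hnp]
  · -- part (ii)
    have hC2 : 2 * R ^ q ≤ (n.choose q : ℝ) := by
      have l1 := pow_le_choose_mul_pow q n hqn'
      have l2 : (2*(q:ℝ)*R)^q ≤ (n:ℝ)^q := pow_le_pow_left₀ (by positivity) hn1 q
      have l3 : (2*(q:ℝ)*R)^q = 2^q * ((q:ℝ)^q * R^q) := by rw [mul_pow, mul_pow]; ring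
      have l4 : (2:ℝ) ≤ 2^q := by
        calc (2:ℝ) = 2^1 := (pow_one 2).symm
        _ ≤ 2^q := pow_le_pow_right₀ (by norm_num) hq
      have hqq : (0:ℝ) < (q:ℝ)^q := by positivity
      have l5 : 2 * ((q:ℝ)^q * R^q) ≤ (n.choose q : ℝ) * (q:ℝ)^q := by
        calc 2 * ((q:ℝ)^q * R^q) ≤ 2^q * ((q:ℝ)^q * R^q) := by
              apply mul_le_mul_of_nonneg_right l4 (by positivity)
          _ = (2*(q:ℝ)*R)^q := l3.symm
          _ ≤ (n:ℝ)^q := l2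
          _ ≤ (n.choose q : ℝ) * (q:ℝ)^q := l1
      have := (mul_le_mul_iff_of_pos_right hqq).mp (by linarith : (2 * R^q) * (q:ℝ)^q ≤ ((n.choose q : ℝ)) * (q:ℝ)^q)
      linarith
    have hμqRq : μq * R ^ q = lam := by
      rw [hRq]
      field_simp
    have hpq : p ^ q ≤ 1/2 := by
      calc p ^ q ≤ p ^ 1 := pow_le_pow_of_le_one hp0.le hp1 hq
        _ = p := pow_one p
        _ ≤ 1/2 := hp_half
    have hCpos : (0:ℝ) ≤ (n.choose q : ℝ) := by positivity
    have hkey : μq * ((n.choose q : ℝ) * p ^ q) + lam ≤ μq * (n.choose q : ℝ) := by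
      have e1 : μq * ((n.choose q : ℝ) * p ^ q) ≤ μq * ((n.choose q : ℝ) * (1/2)) := by
        apply mul_le_mul_of_nonneg_left _ hμq.le
        exact mul_le_mul_of_nonneg_left hpq hCpos
      have e2 : lam ≤ μq * ((n.choose q : ℝ) * (1/2)) := by
        rw [← hμqRq]
        have : R ^ q ≤ (n.choose q : ℝ) * (1/2) := by linarith
        exact mul_le_mul_of_nonneg_left this hμq.le
      linarith
    have hsub : ({(fun _ => true)} : Set (Fin n → Bool)) ⊆
        {ω | (∫ ω', ∑ h ∈ H, μq * ∏ v ∈ h, X v ω' ∂P) + lam ≤ ∑ h ∈ H, μq * ∏ v ∈ h, X v ω} := by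
      rw [Set.singleton_subset_iff]
      show (∫ ω', ∑ h ∈ H, μq * ∏ v ∈ h, X v ω' ∂P) + lam
        ≤ ∑ h ∈ H, μq * ∏ v ∈ h, X v (fun _ => true)
      rw [hEf, hfval]
      have : (Finset.univ.filter (fun i : Fin n => (fun _ => true) i = true)) = Finset.univ := by
        ext i; simp
      rw [this, Finset.card_univ, Fintype.card_fin]
      exact hkey
    have hPsing : P {(fun _ => true : Fin n → Bool)} = ENNReal.ofReal (p ^ n) := by
      rw [hP_def, pi_singleton p hp0.le hp1]
      simp only [if_true]
      rw [Finset.prod_const, Finset.card_univ, Fintype.card_fin, ← ENNReal.ofReal_pow hp0.le]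
    have hmono := measure_mono (μ := P) hsub
    rw [hPsing] at hmono
    have htoReal := ENNReal.toReal_mono (measure_ne_top P _) hmono
    rw [ENNReal.toReal_ofReal (by positivity)] at htoReal
    refine le_trans ?_ htoReal
    -- analytic bound : exp (-(2 ε)) * (ε / (4 q R)) ^ (4 q R) ≤ p ^ n
    set T4 : ℝ := 4 * (q:ℝ) * R with hT4_def
    have hT4n : (n:ℝ) ≤ T4 := hn2
    have hT41 : (1:ℝ) ≤ T4 := by nlinarith
    have hb0 : 0 < ε / T4 := by positivity
    have hb1 : ε / T4 ≤ 1 := by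
      rw [div_le_one (by linarith)]; linarith
    have step1 : (ε/T4) ^ T4 ≤ (ε/T4) ^ ((n:ℝ)) :=
      Real.rpow_le_rpow_of_exponent_ge hb0 hb1 hT4n
    have step2 : (ε/T4) ^ ((n:ℝ)) = (ε/T4) ^ (n:ℕ) := Real.rpow_natCast _ n
    have step3 : (ε/T4) ^ (n:ℕ) ≤ p ^ n := by
      apply pow_le_pow_left₀ hb0.le
      rw [hp_def]
      exact div_le_div_of_nonneg_left hε0.le hn_posR hT4n
    have hexp1 : Real.exp (-(2 * ε)) ≤ 1 := Real.exp_le_one_iff.mpr (by linarith)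
    calc Real.exp (-(2 * ε)) * (ε/T4) ^ T4 ≤ 1 * ((ε/T4) ^ T4) := by
          apply mul_le_mul_of_nonneg_right hexp1 (Real.rpow_nonneg hb0.le _)
      _ = (ε/T4) ^ T4 := one_mul _
      _ ≤ p ^ n := by rw [step2] at step1; exact le_trans step1 step3
  · -- part (iii)
    classical
    set chi : Finset (Fin n) → (Fin n → Bool) := fun S i => decide (i ∈ S) with hchi_def
    have hchiT : ∀ S : Finset (Fin n),
        Finset.univ.filter (fun i => chi S i = true) = S := by
      intro S; ext i; simp [hchi_def]
    have hchiInj : Function.Injective chi := by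
      intro S S' hSS
      ext i
      have := congrFun hSS i
      simp only [hchi_def, decide_eq_decide] at this
      exact this
    set pcs := Finset.powersetCard (q+1) (Finset.univ : Finset (Fin n)) with hpcs_def
    have hmem : ∀ S ∈ pcs, chi S ∈
        {ω | (∫ ω', ∑ h ∈ H, μq * ∏ v ∈ h, X v ω' ∂P) + μq ≤ ∑ h ∈ H, μq * ∏ v ∈ h, X v ω} := by
      intro S hS
      have hScard : S.card = q + 1 := (Finset.mem_powersetCard.mp hS).2
      show (∫ ω', ∑ h ∈ H, μq * ∏ v ∈ h, X v ω' ∂P) + μq ≤ ∑ h ∈ H, μq * ∏ v ∈ h, X v (chi S)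
      rw [hEf, hfval, hchiT, hScard, Nat.choose_succ_self_right]
      have h1 : μq * ((n.choose q : ℝ) * p ^ q) ≤ μq := by
        calc μq * ((n.choose q : ℝ) * p ^ q) ≤ ε ^ q * μq := hEub
          _ ≤ 1 * μq := by apply mul_le_mul_of_nonneg_right hεq1 hμq.le
          _ = μq := one_mul μq
      have h2 : ((q:ℝ) + 1) * μq = μq * ((q+1 : ℕ) : ℝ) := by push_cast; ring
      have hq1 : (1:ℝ) ≤ q := by exact_mod_cast hq
      calc μq * ((n.choose q : ℝ) * p ^ q) + μq ≤ μq + μq := by linarith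
        _ ≤ μq * ((q+1 : ℕ) : ℝ) := by push_cast; nlinarith
    have hPS : ∀ S ∈ pcs, P {chi S} = ENNReal.ofReal (p^(q+1) * (1-p)^(n-(q+1))) := by
      intro S hS
      have hScard : S.card = q + 1 := (Finset.mem_powersetCard.mp hS).2
      rw [hP_def, pi_singleton p hp0.le hp1]
      have h1 : ∀ i : Fin n, ENNReal.ofReal (if chi S i then p else 1-p)
          = if i ∈ S then ENNReal.ofReal p else ENNReal.ofReal (1-p) := by
        intro i
        by_cases hi : i ∈ S <;> simp [hchi_def, hi]
      rw [Finset.prod_congr rfl (fun i _ => h1 i), Finset.prod_ite, Finset.prod_const,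
        Finset.prod_const]
      have hf1 : (Finset.univ.filter (fun i => i ∈ S)) = S := by ext i; simp
      have hf2 : (Finset.univ.filter (fun i => ¬ i ∈ S)).card = n - (q+1) := by
        have : (Finset.univ.filter (fun i => ¬ i ∈ S)) = Sᶜ := by ext i; simp
        rw [this, Finset.card_compl, Fintype.card_fin, hScard]
      rw [hf1, hf2, hScard, ← ENNReal.ofReal_pow hp0.le, ← ENNReal.ofReal_pow (by linarith),
        ← ENNReal.ofReal_mul (by positivity)]
    have hdisj : (↑pcs : Set (Finset (Fin n))).PairwiseDisjoint
        (fun S => ({chi S} : Set (Fin n → Bool))) := by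
      intro S _ S' _ hne
      simp only [Function.onFun, Set.disjoint_singleton]
      exact fun h => hne (hchiInj h)
    have hPB : P (⋃ S ∈ pcs, ({chi S} : Set (Fin n → Bool)))
        = ((n.choose (q+1) : ℕ) : ENNReal) * ENNReal.ofReal (p^(q+1) * (1-p)^(n-(q+1))) := by
      rw [measure_biUnion_finset hdisj (fun S _ => measurableSet_singleton _),
        Finset.sum_congr rfl hPS, Finset.sum_const, nsmul_eq_mul]
      congr 1
      rw [hpcs_def, Finset.card_powersetCard, Finset.card_univ, Fintype.card_fin]
    have hBsub : (⋃ S ∈ pcs, ({chi S} : Set (Fin n → Bool))) ⊆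
        {ω | (∫ ω', ∑ h ∈ H, μq * ∏ v ∈ h, X v ω' ∂P) + μq ≤ ∑ h ∈ H, μq * ∏ v ∈ h, X v ω} := by
      intro ω hω
      simp only [Set.mem_iUnion, Set.mem_singleton_iff] at hω
      obtain ⟨S, hS, rfl⟩ := hω
      exact hmem S hS
    have hmono := measure_mono (μ := P) hBsub
    rw [hPB] at hmono
    have htoReal := ENNReal.toReal_mono (measure_ne_top P _) hmono
    rw [ENNReal.toReal_mul, ENNReal.toReal_natCast,
      ENNReal.toReal_ofReal (by
        have h1p : (0:ℝ) ≤ 1 - p := by linarith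
        positivity)] at htoReal
    refine le_trans ?_ htoReal
    -- analytic: exp(-(2ε)) * (ε/(q+1))^(q+1) ≤ C(n,q+1) * (p^(q+1) * (1-p)^(n-(q+1)))
    have ha1 : Real.exp (-(2*ε)) ≤ (1-p)^n := by
      have e1 : Real.exp (-(2*p)) ≤ 1 - p := exp_neg_two_le hp0.le hp_half
      have e2 : Real.exp (-(2*ε)) = (Real.exp (-(2*p)))^n := by
        rw [← Real.exp_nat_mul]
        congr 1
        rw [← hnp]; ring
      rw [e2]
      exact pow_le_pow_left₀ (Real.exp_pos _).le e1 n
    have ha2 : (1-p)^n ≤ (1-p)^(n-(q+1)) :=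
      pow_le_pow_of_le_one (by linarith) (by linarith) (Nat.sub_le n (q+1))
    have ha3 : (ε/((q:ℝ)+1))^(q+1) ≤ (n.choose (q+1) : ℝ) * p^(q+1) := by
      have l1 := pow_le_choose_mul_pow (q+1) n hq1n
      have hq1pos : (0:ℝ) < ((q:ℝ)+1)^(q+1) := by positivity
      have l2 : ε^(q+1) ≤ ((n.choose (q+1) : ℝ) * p^(q+1)) * ((q:ℝ)+1)^(q+1) := by
        calc ε^(q+1) = ((n:ℝ)*p)^(q+1) := by rw [hnp]
          _ = (n:ℝ)^(q+1) * p^(q+1) := mul_pow _ _ _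
          _ ≤ ((n.choose (q+1) : ℝ) * (((q:ℝ)+1))^(q+1)) * p^(q+1) := by
              apply mul_le_mul_of_nonneg_right _ (by positivity)
              exact_mod_cast l1
          _ = ((n.choose (q+1) : ℝ) * p^(q+1)) * ((q:ℝ)+1)^(q+1) := by ring
      rw [div_pow, div_le_iff₀ hq1pos]
      exact l2
    calc Real.exp (-(2*ε)) * (ε/((q:ℝ)+1))^(q+1)
        ≤ (1-p)^(n-(q+1)) * ((n.choose (q+1) : ℝ) * p^(q+1)) := by
          have h1p : (0:ℝ) ≤ 1 - p := by linarith
          apply mul_le_mul (le_trans ha1 ha2) ha3 (by positivity) (by positivity)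
      _ = (n.choose (q+1) : ℝ) * (p^(q+1) * (1-p)^(n-(q+1))) := by ring
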